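/- Let f : ℝ³ → [0,∞) be measurable, not almost everywhere zero, with ∫_{ℝ³} |p| f(p) dp < ∞, and let h ∈ ℝ³. Then F attains a global minimum on the set of positive definite matrices in Sym3; that is, there exists a positive definite B₀ ∈ Sym3 such that F(B₀) ≤ F(B) for every positive definite B ∈ Sym3. -/

import Mathlib

open MeasureTheory Matrix Real Filter Topology Set Asymptotics

noncomputable section

/-- 3×3 real matrices; symmetric ones form `Sym3`, encoded via `Matrix.IsSymm`/`Matrix.PosDef`. -/
abbrev Mat3 := Matrix (Fin 3) (Fin 3) ℝ

/-- vectors in ℝ³ -/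
abbrev Vec3 := Fin 3 → ℝ

/-- Euclidean norm on ℝ³. -/
def enorm3 (p : Vec3) : ℝ := Real.sqrt (∑ i, p i ^ 2)

/-- the quadratic form pᵀBp. -/
def quadForm (B : Mat3) (p : Vec3) : ℝ := p ⬝ᵥ B.mulVec p

/-- Ψ(B)_{ij} = 4π (det B)^{1/2} ∫ (pᵀBp)^{−1/2} p_i p_j f(p) dp. -/
def PsiM (f : Vec3 → ℝ) (B : Mat3) : Mat3 :=
  Matrix.of fun i j =>
    (4 * π) * Real.sqrt B.det * ∫ p : Vec3, (Real.sqrt (quadForm B p))⁻¹ * (p i * p j * f p)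

/-- χ_b(k)_{ij} = 4π (det b)^{1/2} ∫ (pᵀbp)^{−3/2} ((bp)ᵀ k (bp)) p_i p_j f(p) dp. -/
def chiM (f : Vec3 → ℝ) (b : Mat3) (k : Mat3) : Mat3 :=
  Matrix.of fun i j =>
    (4 * π) * Real.sqrt b.det *
      ∫ p : Vec3, ((Real.sqrt (quadForm b p))⁻¹ ^ 3) * (quadForm k (b.mulVec p) * (p i * p j * f p))

/-- With u = ah, w = kh, α = hᵀah and b = a⁻¹:
M_a(k) = (2/det a)((hᵀkh) a + α k − 2(u wᵀ + w uᵀ) + tr(bk)(2 u uᵀ − α a)). -/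
def MM (a : Mat3) (h : Vec3) (k : Mat3) : Mat3 :=
  (2 / a.det) • ((h ⬝ᵥ k.mulVec h) • a + (h ⬝ᵥ a.mulVec h) • k
    - (2:ℝ) • (vecMulVec (a.mulVec h) (k.mulVec h) + vecMulVec (k.mulVec h) (a.mulVec h))
    + (a⁻¹ * k).trace • ((2:ℝ) • vecMulVec (a.mulVec h) (a.mulVec h) - (h ⬝ᵥ a.mulVec h) • a))

/-- The Fuchsian condition at B (with A = B⁻¹):
2Ψ(B) = A − (2/det A)((hᵀAh) A − 2 (Ah)(Ah)ᵀ). -/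
def FuchsCond (f : Vec3 → ℝ) (h : Vec3) (B : Mat3) : Prop :=
  (2:ℝ) • PsiM f B =
    B⁻¹ - (2 / (B⁻¹).det) •
      ((h ⬝ᵥ (B⁻¹).mulVec h) • B⁻¹ - (2:ℝ) • vecMulVec ((B⁻¹).mulVec h) ((B⁻¹).mulVec h))

/-- F(B) = 16π ∫ (pᵀBp)^{1/2} f dp + 2 (det B)^{−1/2} + 4 (det B)^{1/2} hᵀB⁻¹h. -/
def Ffun (f : Vec3 → ℝ) (h : Vec3) (B : Mat3) : ℝ :=
  16 * π * (∫ p : Vec3, Real.sqrt (quadForm B p) * f p)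
    + 2 * (Real.sqrt B.det)⁻¹ + 4 * Real.sqrt B.det * (h ⬝ᵥ (B⁻¹).mulVec h)

lemma enorm3_nonneg (p : Vec3) : 0 ≤ enorm3 p := Real.sqrt_nonneg _

lemma sq_enorm3 (p : Vec3) : enorm3 p ^ 2 = ∑ i, p i ^ 2 :=
  Real.sq_sqrt (Finset.sum_nonneg fun i _ => sq_nonneg _)

lemma abs_dot_le (p v : Vec3) : |p ⬝ᵥ v| ≤ enorm3 p * enorm3 v := by
  have h1 : (p ⬝ᵥ v)^2 ≤ (∑ i, p i^2) * (∑ i, v i^2) :=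
    Finset.sum_mul_sq_le_sq_mul_sq _ _ _
  have h2 : (enorm3 p * enorm3 v)^2 = (∑ i, p i^2) * (∑ i, v i^2) := by
    rw [mul_pow, sq_enorm3, sq_enorm3]
  have h3 : 0 ≤ enorm3 p * enorm3 v := mul_nonneg (enorm3_nonneg p) (enorm3_nonneg v)
  nlinarith [abs_nonneg (p ⬝ᵥ v), sq_abs (p ⬝ᵥ v)]

lemma abs_apply_le_enorm3 (p : Vec3) (i : Fin 3) : |p i| ≤ enorm3 p := by
  have : p i ^ 2 ≤ ∑ j, p j ^ 2 :=
    Finset.single_le_sum (f := fun j => p j ^ 2) (fun j _ => sq_nonneg _) (Finset.mem_univ i)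
  have := Real.sqrt_le_sqrt this
  rwa [Real.sqrt_sq_eq_abs] at this

lemma enorm3_smul (t : ℝ) (p : Vec3) : enorm3 (t • p) = |t| * enorm3 p := by
  unfold enorm3
  rw [← Real.sqrt_sq_eq_abs, ← Real.sqrt_mul (sq_nonneg t)]
  congr 1
  simp [Finset.mul_sum, mul_pow]

-- symmetry of quad form
lemma dot_mulVec_symm {B : Mat3} (hB : Bᵀ = B) (p v : Vec3) :
    p ⬝ᵥ B.mulVec v = v ⬝ᵥ B.mulVec p := by
  conv_lhs => rw [Matrix.dotProduct_mulVec, ← Matrix.mulVec_transpose, hB]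
  exact dotProduct_comm _ _

lemma quad_expand (B : Mat3) (p v : Vec3) (t : ℝ) :
    quadForm B (p + t • v) =
      quadForm B p + t * (p ⬝ᵥ B.mulVec v + v ⬝ᵥ B.mulVec p) + t^2 * quadForm B v := by
  unfold quadForm
  rw [Matrix.mulVec_add, Matrix.mulVec_smul]
  simp only [dotProduct_add, add_dotProduct, smul_dotProduct, dotProduct_smul, smul_eq_mul]
  ring

/-- Cauchy–Schwarz for a positive semidefinite quadratic form (real). -/
lemma quad_cs {B : Mat3} (hsymm : Bᵀ = B) (hpsd : ∀ x : Vec3, 0 ≤ x ⬝ᵥ B.mulVec x)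
    (p v : Vec3) : (p ⬝ᵥ B.mulVec v)^2 ≤ quadForm B p * quadForm B v := by
  have key : ∀ t : ℝ, 0 ≤ quadForm B v * (t*t) + (2 * (p ⬝ᵥ B.mulVec v)) * t + quadForm B p := by
    intro t
    have h0 := hpsd (p + t • v)
    have h2 := quad_expand B p v t
    rw [dot_mulVec_symm hsymm v p] at h2
    unfold quadForm at h2 h0 ⊢
    nlinarith [h0, h2, sq t]
  have hd := discrim_le_zero key
  unfold discrim at hd
  nlinarith [hd]

lemma continuous_quad_p (B : Mat3) : Continuous fun p : Vec3 => quadForm B p := by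
  unfold quadForm
  exact (continuous_id : Continuous (id : Vec3 → Vec3)).dotProduct
    ((continuous_const (y := B)).matrix_mulVec continuous_id)

lemma continuous_quad_B (p : Vec3) : Continuous fun B : Mat3 => quadForm B p := by
  unfold quadForm
  exact (continuous_const (y := p)).dotProduct
    ((continuous_id : Continuous (id : Mat3 → Mat3)).matrix_mulVec continuous_const)

lemma continuous_enorm3 : Continuous enorm3 := by
  unfold enorm3
  exact Real.continuous_sqrt.comp (continuous_finset_sum _ fun i _ =>
    ((continuous_apply i).pow 2))

lemma continuous_dotBh (h : Vec3) : Continuous fun C : Mat3 => h ⬝ᵥ C.mulVec h :=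
  (continuous_const (y := h)).dotProduct
    ((continuous_id : Continuous (id : Mat3 → Mat3)).matrix_mulVec continuous_const)

def entSum (B : Mat3) : ℝ := ∑ i, ∑ j, |B i j|

lemma entSum_nonneg (B : Mat3) : 0 ≤ entSum B :=
  Finset.sum_nonneg fun i _ => Finset.sum_nonneg fun j _ => abs_nonneg _

lemma abs_apply_le_enorm3' (p : Vec3) (i : Fin 3) : |p i| ≤ enorm3 p := by
  have h : p i ^ 2 ≤ ∑ j, p j ^ 2 :=
    Finset.single_le_sum (f := fun j => p j ^ 2) (fun j _ => sq_nonneg _) (Finset.mem_univ i)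
  have h2 := Real.sqrt_le_sqrt h
  rwa [Real.sqrt_sq_eq_abs] at h2

lemma quad_le_entSum (B : Mat3) (p : Vec3) : quadForm B p ≤ entSum B * enorm3 p ^ 2 := by
  have expand : quadForm B p = ∑ i, ∑ j, p i * (B i j * p j) := by
    simp only [quadForm, dotProduct, Matrix.mulVec, Finset.mul_sum]
  rw [expand, entSum, Finset.sum_mul]
  refine Finset.sum_le_sum fun i _ => ?_
  rw [Finset.sum_mul]
  refine Finset.sum_le_sum fun j _ => ?_
  have h1 : p i * (B i j * p j) ≤ |p i * (B i j * p j)| := le_abs_self _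
  have h2 : |p i * (B i j * p j)| = |B i j| * (|p i| * |p j|) := by
    rw [abs_mul, abs_mul]; ring
  have h3 : |p i| * |p j| ≤ enorm3 p ^ 2 := by
    have := abs_apply_le_enorm3' p i
    have := abs_apply_le_enorm3' p j
    nlinarith [abs_nonneg (p i), abs_nonneg (p j)]
  calc p i * (B i j * p j) ≤ |B i j| * (|p i| * |p j|) := h1.trans_eq h2
    _ ≤ |B i j| * enorm3 p ^ 2 := by
        exact mul_le_mul_of_nonneg_left h3 (abs_nonneg _)

lemma sqrt_quad_le (B : Mat3) (p : Vec3) :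
    Real.sqrt (quadForm B p) ≤ Real.sqrt (entSum B) * enorm3 p := by
  have := Real.sqrt_le_sqrt (quad_le_entSum B p)
  rwa [Real.sqrt_mul (entSum_nonneg B), Real.sqrt_sq (enorm3_nonneg p)] at this

lemma abs_dot_le' (p v : Vec3) : |p ⬝ᵥ v| ≤ enorm3 p * enorm3 v := by
  have h1 : (p ⬝ᵥ v)^2 ≤ (∑ i, p i^2) * (∑ i, v i^2) :=
    Finset.sum_mul_sq_le_sq_mul_sq _ _ _
  have h2 : (enorm3 p * enorm3 v)^2 = (∑ i, p i^2) * (∑ i, v i^2) := by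
    rw [mul_pow]
    unfold enorm3
    rw [Real.sq_sqrt (Finset.sum_nonneg fun i _ => sq_nonneg _),
      Real.sq_sqrt (Finset.sum_nonneg fun i _ => sq_nonneg _)]
  nlinarith [abs_nonneg (p ⬝ᵥ v), sq_abs (p ⬝ᵥ v),
    mul_nonneg (enorm3_nonneg p) (enorm3_nonneg v)]

section WithF
variable {f : Vec3 → ℝ} (hmeas : Measurable f) (hnonneg : ∀ p, 0 ≤ f p)
  (hint : Integrable (fun p : Vec3 => enorm3 p * f p))

include hmeas hnonneg hint

lemma integrable_sqrtquad (B : Mat3) :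
    Integrable (fun p : Vec3 => Real.sqrt (quadForm B p) * f p) := by
  refine Integrable.mono' (hint.const_mul (Real.sqrt (entSum B))) ?_ ?_
  · exact ((Real.continuous_sqrt.comp (continuous_quad_p B)).measurable.mul
      hmeas).aestronglyMeasurable
  · refine Filter.Eventually.of_forall fun p => ?_
    rw [Real.norm_eq_abs, abs_mul, abs_of_nonneg (Real.sqrt_nonneg _),
      abs_of_nonneg (hnonneg p), ← mul_assoc]
    exact mul_le_mul_of_nonneg_right (sqrt_quad_le B p) (hnonneg p)

lemma integrable_absdot (u : Vec3) :
    Integrable (fun p : Vec3 => |p ⬝ᵥ u| * f p) := by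
  refine Integrable.mono' (hint.const_mul (enorm3 u)) ?_ ?_
  · have hc : Continuous fun p : Vec3 => |p ⬝ᵥ u| :=
      (continuous_id.dotProduct continuous_const).abs
    exact (hc.measurable.mul hmeas).aestronglyMeasurable
  · refine Filter.Eventually.of_forall fun p => ?_
    rw [Real.norm_eq_abs, abs_mul, abs_of_nonneg (abs_nonneg _), abs_of_nonneg (hnonneg p)]
    calc |p ⬝ᵥ u| * f p ≤ enorm3 p * enorm3 u * f p :=
          mul_le_mul_of_nonneg_right (abs_dot_le' p u) (hnonneg p)
      _ = enorm3 u * (enorm3 p * f p) := by ring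

end WithF

lemma enorm3_smul' (t : ℝ) (p : Vec3) : enorm3 (t • p) = |t| * enorm3 p := by
  unfold enorm3
  rw [← Real.sqrt_sq_eq_abs, ← Real.sqrt_mul (sq_nonneg t)]
  congr 1
  simp [Finset.mul_sum, mul_pow]

section CFun
variable {f : Vec3 → ℝ} (hmeas : Measurable f) (hnonneg : ∀ p, 0 ≤ f p)
  (hint : Integrable (fun p : Vec3 => enorm3 p * f p))

/-- c v = ∫ |p ⬝ᵥ v| f p -/
def cfun (f : Vec3 → ℝ) (v : Vec3) : ℝ := ∫ p : Vec3, |p ⬝ᵥ v| * f p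

include hmeas hnonneg hint

lemma cfun_sub_le (v w : Vec3) :
    cfun f v - cfun f w ≤ enorm3 (v - w) * ∫ p : Vec3, enorm3 p * f p := by
  have h1 := integrable_absdot hmeas hnonneg hint v
  have h2 := integrable_absdot hmeas hnonneg hint w
  rw [cfun, cfun, ← integral_sub h1 h2]
  have key : ∀ p : Vec3, |p ⬝ᵥ v| * f p - |p ⬝ᵥ w| * f p ≤ enorm3 (v - w) * (enorm3 p * f p) := by
    intro p
    have hd : |p ⬝ᵥ v| - |p ⬝ᵥ w| ≤ |p ⬝ᵥ (v - w)| := by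
      have hh : p ⬝ᵥ v - p ⬝ᵥ w = p ⬝ᵥ (v - w) := (dotProduct_sub p v w).symm
      calc |p ⬝ᵥ v| - |p ⬝ᵥ w| ≤ |p ⬝ᵥ v - p ⬝ᵥ w| := abs_sub_abs_le_abs_sub _ _
        _ = |p ⬝ᵥ (v - w)| := by rw [hh]
    have hd2 : |p ⬝ᵥ (v - w)| ≤ enorm3 p * enorm3 (v - w) := abs_dot_le' p (v - w)
    nlinarith [hnonneg p, enorm3_nonneg p, enorm3_nonneg (v - w)]
  calc (∫ p : Vec3, (|p ⬝ᵥ v| * f p - |p ⬝ᵥ w| * f p))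
      ≤ ∫ p : Vec3, enorm3 (v - w) * (enorm3 p * f p) :=
        integral_mono (h1.sub h2) (hint.const_mul _) key
    _ = enorm3 (v - w) * ∫ p : Vec3, enorm3 p * f p := integral_const_mul _ _

lemma continuous_cfun : Continuous (cfun f) := by
  set I1 : ℝ := ∫ p : Vec3, enorm3 p * f p with hI1
  have hI1nn : 0 ≤ I1 := integral_nonneg fun p => mul_nonneg (enorm3_nonneg p) (hnonneg p)
  have key : ∀ v w : Vec3, |cfun f v - cfun f w| ≤ enorm3 (v - w) * I1 := by
    intro v w
    rw [abs_le]
    refine ⟨?_, cfun_sub_le hmeas hnonneg hint v w⟩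
    have h2 := cfun_sub_le hmeas hnonneg hint w v
    have he : enorm3 (w - v) = enorm3 (v - w) := by
      have hwv : w - v = (-1 : ℝ) • (v - w) := by
        funext i
        show w i - v i = (-1 : ℝ) * (v i - w i)
        ring
      rw [hwv, enorm3_smul']
      norm_num
    rw [he] at h2
    linarith
  have hb : ∀ u : Vec3, enorm3 u ≤ 2 * ‖u‖ := by
    intro u
    have h1 : ∀ i, u i ^ 2 ≤ ‖u‖ ^ 2 := by
      intro i
      have hle : |u i| ≤ ‖u‖ := by
        rw [← Real.norm_eq_abs]
        exact norm_le_pi_norm u i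
      nlinarith [abs_nonneg (u i), sq_abs (u i), norm_nonneg u]
    have h2 : (∑ i, u i ^ 2) ≤ 3 * ‖u‖ ^ 2 := by
      have h3 := Finset.sum_le_sum (fun i (_ : i ∈ Finset.univ) => h1 i)
      simpa [Finset.sum_const, Finset.card_univ] using h3
    have h4 : (∑ i, u i ^ 2) ≤ 4 * ‖u‖ ^ 2 := by nlinarith [norm_nonneg u]
    calc enorm3 u = Real.sqrt (∑ i, u i ^ 2) := rfl
      _ ≤ Real.sqrt ((2 * ‖u‖) ^ 2) := Real.sqrt_le_sqrt (by nlinarith [norm_nonneg u])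
      _ = 2 * ‖u‖ := Real.sqrt_sq (by positivity)
  rw [Metric.continuous_iff]
  intro v ε hε
  refine ⟨ε / (2 * (I1 + 1)), by positivity, fun w hw => ?_⟩
  rw [Real.dist_eq]
  calc |cfun f w - cfun f v| ≤ enorm3 (w - v) * I1 := key w v
    _ ≤ (2 * ‖w - v‖) * (I1 + 1) := by
        refine mul_le_mul (hb _) (by linarith) hI1nn (by positivity)
    _ = 2 * dist w v * (I1 + 1) := by rw [dist_eq_norm]
    _ < ε := by
        have h5 : dist w v < ε / (2 * (I1 + 1)) := hw
        have h6 : (0:ℝ) < 2 * (I1 + 1) := by linarith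
        have h7 := dist_nonneg (x := w) (y := v)
        calc 2 * dist w v * (I1 + 1) < 2 * (ε / (2 * (I1 + 1))) * (I1 + 1) := by nlinarith
          _ = ε := by field_simp
end CFun

def dotLin (v : Vec3) : Vec3 →ₗ[ℝ] ℝ where
  toFun p := p ⬝ᵥ v
  map_add' p q := add_dotProduct p q v
  map_smul' t p := by simp [smul_dotProduct]

section CPos
variable {f : Vec3 → ℝ} (hmeas : Measurable f) (hnonneg : ∀ p, 0 ≤ f p)
  (hint : Integrable (fun p : Vec3 => enorm3 p * f p)) (hne : ¬ f =ᵐ[volume] 0)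

include hmeas hnonneg hint hne

lemma cfun_pos {v : Vec3} (hv : enorm3 v = 1) : 0 < cfun f v := by
  set g : Vec3 → ℝ := fun p => |p ⬝ᵥ v| * f p with hg
  have hgnn : ∀ p, 0 ≤ g p := fun p => mul_nonneg (abs_nonneg _) (hnonneg p)
  have hgint : Integrable g := integrable_absdot hmeas hnonneg hint v
  rw [cfun]
  rw [show (∫ p : Vec3, |p ⬝ᵥ v| * f p) = ∫ p, g p from rfl]
  refine (integral_pos_iff_support_of_nonneg hgnn hgint).mpr ?_
  -- the hyperplane has measure zero
  have hvv : v ⬝ᵥ v = 1 := by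
    have h1 : (enorm3 v) ^ 2 = 1 := by rw [hv]; norm_num
    have h2 : (enorm3 v) ^ 2 = ∑ i, v i ^ 2 :=
      Real.sq_sqrt (Finset.sum_nonneg fun i _ => sq_nonneg _)
    unfold dotProduct
    rw [← h1, h2]
    exact Finset.sum_congr rfl fun i _ => (sq (v i)).symm
  have hker : LinearMap.ker (dotLin v) ≠ ⊤ := by
    intro htop
    have : dotLin v v = 0 := by
      have : v ∈ LinearMap.ker (dotLin v) := htop ▸ Submodule.mem_top
      exact LinearMap.mem_ker.mp this
    rw [show dotLin v v = v ⬝ᵥ v from rfl, hvv] at this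
    norm_num at this
  have hH : volume {p : Vec3 | p ⬝ᵥ v = 0} = 0 := by
    have := MeasureTheory.Measure.addHaar_submodule (volume : Measure Vec3)
      (LinearMap.ker (dotLin v)) hker
    convert this using 2
    ext p; simp [dotLin]
  have hsupp : volume (Function.support f) ≠ 0 := by
    intro h0
    apply hne
    rw [Filter.eventuallyEq_iff_exists_mem]
    exact ⟨(Function.support f)ᶜ, by
      rw [MeasureTheory.mem_ae_iff, compl_compl]; exact h0,
      fun p hp => by simpa [Function.mem_support, not_not] using hp⟩
  have hsub : Function.support f ⊆ Function.support g ∪ {p : Vec3 | p ⬝ᵥ v = 0} := by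
    intro p hp
    by_cases hd : p ⬝ᵥ v = 0
    · exact Or.inr hd
    · refine Or.inl ?_
      simp only [Function.mem_support, hg]
      exact mul_ne_zero (abs_ne_zero.mpr hd) hp
  by_contra hcon
  push_neg at hcon
  have h1 : volume (Function.support g) = 0 := le_antisymm hcon zero_le
  have h2 : volume (Function.support f) ≤ volume (Function.support g) + volume {p : Vec3 | p ⬝ᵥ v = 0} :=
    le_trans (measure_mono hsub) (measure_union_le _ _)
  rw [h1, hH] at h2
  simp at h2
  exact hsupp h2

lemma exists_c0 : ∃ c0 : ℝ, 0 < c0 ∧ ∀ v : Vec3, enorm3 v = 1 → c0 ≤ cfun f v := by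
  set S : Set Vec3 := {v | enorm3 v = 1} with hS
  have hclosed : IsClosed S := isClosed_eq continuous_enorm3 continuous_const
  have hbdd : Bornology.IsBounded S := by
    rw [Metric.isBounded_iff_subset_closedBall 0]
    refine ⟨1, fun v hv => ?_⟩
    rw [Metric.mem_closedBall, dist_zero_right]
    rw [pi_norm_le_iff_of_nonneg zero_le_one]
    intro i
    rw [Real.norm_eq_abs]
    calc |v i| ≤ enorm3 v := abs_apply_le_enorm3' v i
      _ = 1 := hv
  have hcpt : IsCompact S := Metric.isCompact_of_isClosed_isBounded hclosed hbdd
  have hne' : S.Nonempty := by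
    refine ⟨![1,0,0], ?_⟩
    show enorm3 ![1,0,0] = 1
    unfold enorm3
    rw [Fin.sum_univ_three]
    simp
  obtain ⟨v₀, hv₀S, hmin⟩ := hcpt.exists_isMinOn hne'
    (continuous_cfun hmeas hnonneg hint).continuousOn
  exact ⟨cfun f v₀, cfun_pos hmeas hnonneg hint hne hv₀S, fun v hv => hmin hv⟩

end CPos

section KeyBound
variable {f : Vec3 → ℝ} (hmeas : Measurable f) (hnonneg : ∀ p, 0 ≤ f p)
  (hint : Integrable (fun p : Vec3 => enorm3 p * f p))

include hmeas hnonneg hint in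
lemma int_sqrtquad_ge {c0 : ℝ} (hc0 : ∀ v : Vec3, enorm3 v = 1 → c0 ≤ cfun f v)
    (hc0nn : 0 ≤ c0)
    {B : Mat3} (hsymm : Bᵀ = B) (hpsd : ∀ x : Vec3, 0 ≤ x ⬝ᵥ B.mulVec x)
    {v : Vec3} (hv : enorm3 v = 1) (hqv : 0 < quadForm B v) :
    c0 * Real.sqrt (quadForm B v) ≤ ∫ p : Vec3, Real.sqrt (quadForm B p) * f p := by
  set u : Vec3 := B.mulVec v with hu
  set qv : ℝ := quadForm B v with hqv'
  -- pointwise bound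
  have hpt : ∀ p : Vec3, |p ⬝ᵥ u| * f p ≤ Real.sqrt qv * (Real.sqrt (quadForm B p) * f p) := by
    intro p
    have h1 : (p ⬝ᵥ u)^2 ≤ quadForm B p * qv := quad_cs hsymm hpsd p v
    have h2 : |p ⬝ᵥ u| ≤ Real.sqrt (quadForm B p) * Real.sqrt qv := by
      rw [← Real.sqrt_sq_eq_abs, ← Real.sqrt_mul (show (0:ℝ) ≤ quadForm B p from hpsd p)]
      exact Real.sqrt_le_sqrt h1
    calc |p ⬝ᵥ u| * f p ≤ (Real.sqrt (quadForm B p) * Real.sqrt qv) * f p :=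
          mul_le_mul_of_nonneg_right h2 (hnonneg p)
      _ = Real.sqrt qv * (Real.sqrt (quadForm B p) * f p) := by ring
  -- integral bound
  have hI1 : (∫ p : Vec3, |p ⬝ᵥ u| * f p)
      ≤ Real.sqrt qv * ∫ p : Vec3, Real.sqrt (quadForm B p) * f p := by
    calc (∫ p : Vec3, |p ⬝ᵥ u| * f p)
        ≤ ∫ p : Vec3, Real.sqrt qv * (Real.sqrt (quadForm B p) * f p) :=
          integral_mono (integrable_absdot hmeas hnonneg hint u)
            ((integrable_sqrtquad hmeas hnonneg hint B).const_mul _) hpt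
      _ = Real.sqrt qv * ∫ p : Vec3, Real.sqrt (quadForm B p) * f p := integral_const_mul _ _
  -- lower bound via c0
  have htu : qv ≤ enorm3 u := by
    have h1 : qv = v ⬝ᵥ u := rfl
    calc qv = v ⬝ᵥ u := h1
      _ ≤ |v ⬝ᵥ u| := le_abs_self _
      _ ≤ enorm3 v * enorm3 u := abs_dot_le' v u
      _ = enorm3 u := by rw [hv, one_mul]
  have htpos : 0 < enorm3 u := lt_of_lt_of_le hqv htu
  have hw : enorm3 ((enorm3 u)⁻¹ • u) = 1 := by
    rw [enorm3_smul', abs_of_nonneg (inv_nonneg.mpr (enorm3_nonneg u)),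
      inv_mul_cancel₀ (ne_of_gt htpos)]
  have hI2 : enorm3 u * cfun f ((enorm3 u)⁻¹ • u) = ∫ p : Vec3, |p ⬝ᵥ u| * f p := by
    rw [cfun, ← integral_const_mul]
    congr 1
    funext p
    have : p ⬝ᵥ ((enorm3 u)⁻¹ • u) = (enorm3 u)⁻¹ * (p ⬝ᵥ u) := by
      rw [dotProduct_smul]; rfl
    rw [this, abs_mul, abs_of_nonneg (inv_nonneg.mpr (enorm3_nonneg u))]
    field_simp
  have hI3 : c0 * qv ≤ ∫ p : Vec3, |p ⬝ᵥ u| * f p := by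
    have h5 := hc0 _ hw
    calc c0 * qv ≤ c0 * enorm3 u := mul_le_mul_of_nonneg_left htu hc0nn
      _ = enorm3 u * c0 := mul_comm _ _
      _ ≤ enorm3 u * cfun f ((enorm3 u)⁻¹ • u) := mul_le_mul_of_nonneg_left h5 htpos.le
      _ = _ := hI2
  -- combine
  have hsq : Real.sqrt qv * Real.sqrt qv = qv := Real.mul_self_sqrt hqv.le
  have hsqpos : 0 < Real.sqrt qv := Real.sqrt_pos.mpr hqv
  have : (c0 * Real.sqrt qv) * Real.sqrt qv ≤
      (∫ p : Vec3, Real.sqrt (quadForm B p) * f p) * Real.sqrt qv := by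
    calc (c0 * Real.sqrt qv) * Real.sqrt qv = c0 * qv := by rw [mul_assoc, hsq]
      _ ≤ ∫ p : Vec3, |p ⬝ᵥ u| * f p := hI3
      _ ≤ Real.sqrt qv * ∫ p : Vec3, Real.sqrt (quadForm B p) * f p := hI1
      _ = (∫ p : Vec3, Real.sqrt (quadForm B p) * f p) * Real.sqrt qv := mul_comm _ _
  exact le_of_mul_le_mul_right this hsqpos

end KeyBound

/-! ### The compact set K -/

def Kset (R d : ℝ) : Set Mat3 :=
  {B | (∀ x : Vec3, 0 ≤ x ⬝ᵥ B.mulVec x) ∧ Bᵀ = B ∧ d ≤ B.det ∧ ∀ i j, |B i j| ≤ R}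

lemma continuous_entry (i j : Fin 3) : Continuous fun B : Mat3 => B i j :=
  (continuous_id : Continuous (id : Mat3 → Mat3)).matrix_elem i j

lemma isClosed_Kset (R d : ℝ) : IsClosed (Kset R d) := by
  have h1 : IsClosed {B : Mat3 | ∀ x : Vec3, 0 ≤ x ⬝ᵥ B.mulVec x} := by
    have : {B : Mat3 | ∀ x : Vec3, 0 ≤ x ⬝ᵥ B.mulVec x}
        = ⋂ x : Vec3, {B : Mat3 | 0 ≤ x ⬝ᵥ B.mulVec x} := by
      ext B; simp
    rw [this]
    exact isClosed_iInter fun x => isClosed_le continuous_const (continuous_dotBh x)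
  have h2 : IsClosed {B : Mat3 | Bᵀ = B} :=
    isClosed_eq ((continuous_id : Continuous (id : Mat3 → Mat3)).matrix_transpose) continuous_id
  have h3 : IsClosed {B : Mat3 | d ≤ B.det} :=
    isClosed_le continuous_const ((continuous_id : Continuous (id : Mat3 → Mat3)).matrix_det)
  have h4 : IsClosed {B : Mat3 | ∀ i j, |B i j| ≤ R} := by
    have : {B : Mat3 | ∀ i j, |B i j| ≤ R}
        = ⋂ i, ⋂ j, {B : Mat3 | |B i j| ≤ R} := by ext B; simp
    rw [this]
    exact isClosed_iInter fun i => isClosed_iInter fun j =>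
      isClosed_le (continuous_entry i j).abs continuous_const
  have : Kset R d = {B : Mat3 | ∀ x : Vec3, 0 ≤ x ⬝ᵥ B.mulVec x} ∩
      ({B : Mat3 | Bᵀ = B} ∩ ({B : Mat3 | d ≤ B.det} ∩ {B : Mat3 | ∀ i j, |B i j| ≤ R})) := by
    ext B
    simp only [Kset, Set.mem_setOf_eq, Set.mem_inter_iff]
  rw [this]
  exact h1.inter (h2.inter (h3.inter h4))

lemma isCompact_Kset (R d : ℝ) : IsCompact (Kset R d) := by
  have hpi : IsCompact (Set.pi (Set.univ : Set (Fin 3)) fun _ =>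
      Set.pi (Set.univ : Set (Fin 3)) fun _ => Set.Icc (-R) R) :=
    isCompact_univ_pi fun _ => isCompact_univ_pi fun _ => isCompact_Icc
  refine IsCompact.of_isClosed_subset hpi (isClosed_Kset R d) ?_
  intro B hB
  refine Set.mem_univ_pi.mpr ?_
  intro i
  rw [Set.mem_univ_pi]
  intro j
  exact abs_le.mp (hB.2.2.2 i j)

lemma posDef_of_mem_Kset {R d : ℝ} (hd : 0 < d) {B : Mat3} (hB : B ∈ Kset R d) : B.PosDef := by
  obtain ⟨hpsd, hsymm, hdet, _⟩ := hB
  have hherm : B.IsHermitian := by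
    have : Bᴴ = Bᵀ := by
      ext i j
      simp [Matrix.conjTranspose_apply]
    rw [Matrix.IsHermitian, this, hsymm]
  refine Matrix.PosDef.of_dotProduct_mulVec_pos hherm fun ⦃x⦄ hx => ?_
  have hstar : star x = x := by
    funext i
    simp
  rw [hstar]
  rcases lt_or_eq_of_le (hpsd x) with hlt | heq
  · exact hlt
  · -- quadForm B x = 0 forces B *ᵥ x = 0, contradicting invertibility
    exfalso
    have hBx : B.mulVec x = 0 := by
      funext i
      have hcs := quad_cs hsymm hpsd (Pi.single i 1) x
      have hq0 : quadForm B x = 0 := heq.symm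
      have hdot : Pi.single i 1 ⬝ᵥ B.mulVec x = (B.mulVec x) i := by
        rw [single_dotProduct, one_mul]
      rw [hq0, mul_zero, hdot] at hcs
      have : (B.mulVec x) i = 0 := by nlinarith [sq_nonneg ((B.mulVec x) i)]
      simpa using this
    have hdet' : IsUnit B.det := by
      apply isUnit_iff_ne_zero.mpr
      exact ne_of_gt (lt_of_lt_of_le hd hdet)
    have hx0 : x = 0 := by
      have h1 : B⁻¹.mulVec (B.mulVec x) = x := by
        rw [Matrix.mulVec_mulVec, Matrix.nonsing_inv_mul B hdet', Matrix.one_mulVec]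
      rw [hBx, Matrix.mulVec_zero] at h1
      exact h1.symm
    exact hx hx0

instance : FirstCountableTopology Mat3 :=
  inferInstanceAs (FirstCountableTopology (Fin 3 → Fin 3 → ℝ))

lemma continuous_entSum : Continuous entSum :=
  continuous_finset_sum _ fun i _ => continuous_finset_sum _ fun j _ => (continuous_entry i j).abs

section FfunCont
variable {f : Vec3 → ℝ} (hmeas : Measurable f) (hnonneg : ∀ p, 0 ≤ f p)
  (hint : Integrable (fun p : Vec3 => enorm3 p * f p))

include hmeas hnonneg hint in
lemma continuousAt_intterm (B₀ : Mat3) :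
    ContinuousAt (fun B : Mat3 => ∫ p : Vec3, Real.sqrt (quadForm B p) * f p) B₀ := by
  set M : ℝ := entSum B₀ + 1 with hM
  have hMpos : 0 < M := lt_of_le_of_lt (entSum_nonneg B₀) (lt_add_one _)
  have hV : IsOpen {B : Mat3 | entSum B < M} := isOpen_lt continuous_entSum continuous_const
  have hB₀V : B₀ ∈ {B : Mat3 | entSum B < M} := by show entSum B₀ < M; rw [hM]; exact lt_add_one _
  refine continuousAt_of_dominated ?_ ?_ ?_ ?_
    (bound := fun p => Real.sqrt M * (enorm3 p * f p))
  · exact Filter.Eventually.of_forall fun B =>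
      ((Real.continuous_sqrt.comp (continuous_quad_p B)).measurable.mul
        hmeas).aestronglyMeasurable
  · refine Filter.eventually_iff_exists_mem.mpr ⟨_, hV.mem_nhds hB₀V, fun B hB => ?_⟩
    refine Filter.Eventually.of_forall fun p => ?_
    rw [Real.norm_eq_abs, abs_mul, abs_of_nonneg (Real.sqrt_nonneg _),
      abs_of_nonneg (hnonneg p)]
    have h1 : Real.sqrt (quadForm B p) ≤ Real.sqrt M * enorm3 p := by
      calc Real.sqrt (quadForm B p) ≤ Real.sqrt (entSum B) * enorm3 p := sqrt_quad_le B p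
        _ ≤ Real.sqrt M * enorm3 p :=
            mul_le_mul_of_nonneg_right (Real.sqrt_le_sqrt hB.le) (enorm3_nonneg p)
    calc Real.sqrt (quadForm B p) * f p ≤ (Real.sqrt M * enorm3 p) * f p :=
          mul_le_mul_of_nonneg_right h1 (hnonneg p)
      _ = Real.sqrt M * (enorm3 p * f p) := by ring
  · exact hint.const_mul _
  · refine Filter.Eventually.of_forall fun p => ?_
    exact ((Real.continuous_sqrt.comp (continuous_quad_B p)).mul continuous_const).continuousAt

include hmeas hnonneg hint in
lemma continuousOn_Ffun (h : Vec3) :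
    ContinuousOn (Ffun f h) {B : Mat3 | 0 < B.det} := by
  intro B₀ hB₀
  apply ContinuousAt.continuousWithinAt
  have hdetc : ContinuousAt (fun B : Mat3 => B.det) B₀ :=
    ((continuous_id : Continuous (id : Mat3 → Mat3)).matrix_det).continuousAt
  have hsqrtc : ContinuousAt (fun B : Mat3 => Real.sqrt B.det) B₀ :=
    Real.continuous_sqrt.continuousAt.comp hdetc
  have hdet0 : Real.sqrt B₀.det ≠ 0 := ne_of_gt (Real.sqrt_pos.mpr hB₀)
  have hinvc : ContinuousAt (fun B : Mat3 => B⁻¹) B₀ := by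
    apply continuousAt_matrix_inv
    rw [Ring.inverse_eq_inv']
    exact continuousAt_inv₀ (ne_of_gt hB₀)
  have hterm3 : ContinuousAt (fun B : Mat3 => h ⬝ᵥ (B⁻¹).mulVec h) B₀ :=
    (continuous_dotBh h).continuousAt.comp hinvc
  exact ((continuousAt_const.mul (continuousAt_intterm hmeas hnonneg hint B₀)).add
      (continuousAt_const.mul (hsqrtc.inv₀ hdet0))).add
    ((continuousAt_const.mul hsqrtc).mul hterm3)

end FfunCont

lemma enorm3_single (i : Fin 3) : enorm3 (Pi.single i 1) = 1 := by
  unfold enorm3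
  have : (∑ j, (Pi.single i 1 : Vec3) j ^ 2) = 1 := by
    rw [Finset.sum_eq_single i]
    · simp
    · intro j _ hj
      simp [Pi.single_apply, hj]
    · intro hi
      exact absurd (Finset.mem_univ i) hi
  rw [this, Real.sqrt_one]

/-- F attains a global minimum on positive definite symmetric matrices. -/
theorem Ffun_exists_global_min (f : Vec3 → ℝ) (h : Vec3)
    (hmeas : Measurable f) (hnonneg : ∀ p, 0 ≤ f p)
    (hne : ¬ f =ᵐ[volume] 0)
    (hint : Integrable (fun p : Vec3 => enorm3 p * f p)) :
    ∃ B₀ : Mat3, B₀.PosDef ∧ ∀ B : Mat3, B.PosDef → Ffun f h B₀ ≤ Ffun f h B := by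
  obtain ⟨c0, hc0pos, hc0⟩ := exists_c0 hmeas hnonneg hint hne
  have hterm2 : ∀ B : Mat3, B.PosDef →
      2 * (Real.sqrt B.det)⁻¹ ≤ Ffun f h B ∧
      16 * Real.pi * (∫ p : Vec3, Real.sqrt (quadForm B p) * f p) ≤ Ffun f h B := by
    intro B hB
    have hIpos : 0 ≤ ∫ p : Vec3, Real.sqrt (quadForm B p) * f p :=
      integral_nonneg fun p => mul_nonneg (Real.sqrt_nonneg _) (hnonneg p)
    have hdpos : 0 < B.det := hB.det_pos
    have hsnn : 0 ≤ Real.sqrt B.det := Real.sqrt_nonneg _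
    have hT3 : 0 ≤ 4 * Real.sqrt B.det * (h ⬝ᵥ (B⁻¹).mulVec h) := by
      have hinv := hB.inv.posSemidef.dotProduct_mulVec_nonneg h
      rw [show star h = h from funext fun i => star_trivial _] at hinv
      exact mul_nonneg (mul_nonneg (by norm_num) hsnn) hinv
    have hT1 : 0 ≤ 16 * Real.pi * ∫ p : Vec3, Real.sqrt (quadForm B p) * f p :=
      mul_nonneg (mul_nonneg (by norm_num) Real.pi_pos.le) hIpos
    have hT2 : 0 < 2 * (Real.sqrt B.det)⁻¹ := by
      have : 0 < Real.sqrt B.det := Real.sqrt_pos.mpr hdpos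
      positivity
    constructor <;> (simp only [Ffun]; linarith)
  set F₁ : ℝ := Ffun f h 1 with hF₁def
  have hF₁pos : 0 < F₁ := by
    have h1 := (hterm2 1 Matrix.PosDef.one).1
    have h2 : (0:ℝ) < 2 * (Real.sqrt (1:Mat3).det)⁻¹ := by
      rw [Matrix.det_one, Real.sqrt_one]; norm_num
    exact lt_of_lt_of_le h2 h1
  set r : ℝ := F₁ / (16 * Real.pi * c0) with hr
  have hrpos : 0 < r := div_pos hF₁pos (by positivity)
  set R : ℝ := max (r^2) 1 with hR
  set d : ℝ := min ((2/F₁)^2) 1 with hd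
  have hdpos : 0 < d := lt_min (by positivity) one_pos
  have h1K : (1:Mat3) ∈ Kset R d := by
    refine ⟨?_, Matrix.transpose_one, ?_, ?_⟩
    · intro x
      rw [Matrix.one_mulVec]
      exact Finset.sum_nonneg fun i _ => mul_self_nonneg _
    · rw [Matrix.det_one]; exact min_le_right _ _
    · intro i j
      have h1 : |(1:Mat3) i j| ≤ 1 := by
        rw [Matrix.one_apply]
        split_ifs <;> simp
      exact h1.trans (le_max_right _ _)
  have hsub : ∀ B : Mat3, B.PosDef → Ffun f h B ≤ F₁ → B ∈ Kset R d := by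
    intro B hB hle
    have hsymm : Bᵀ = B := by
      have hh := hB.isHermitian
      rw [Matrix.IsHermitian] at hh
      have hconj : Bᴴ = Bᵀ := by
        ext i j; simp [Matrix.conjTranspose_apply]
      rw [← hconj]; exact hh
    have hpsd : ∀ x : Vec3, 0 ≤ x ⬝ᵥ B.mulVec x := by
      intro x
      have hx := hB.posSemidef.dotProduct_mulVec_nonneg x
      rwa [show star x = x from funext fun i => star_trivial _] at hx
    obtain ⟨hT2le, hT1le⟩ := hterm2 B hB
    have hdet : d ≤ B.det := by
      have hs : 0 < Real.sqrt B.det := Real.sqrt_pos.mpr hB.det_pos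
      have h2 : 2 * (Real.sqrt B.det)⁻¹ ≤ F₁ := le_trans hT2le hle
      have h4 : 2 ≤ F₁ * Real.sqrt B.det := by
        have h5 := mul_le_mul_of_nonneg_right h2 hs.le
        rw [mul_assoc, inv_mul_cancel₀ (ne_of_gt hs), mul_one] at h5
        linarith
      have h3 : 2 / F₁ ≤ Real.sqrt B.det := by
        rw [div_le_iff₀ hF₁pos]
        linarith [mul_comm F₁ (Real.sqrt B.det)]
      have h5 : (2/F₁)^2 ≤ B.det := by
        have hsq : Real.sqrt B.det ^ 2 = B.det := Real.sq_sqrt hB.det_pos.le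
        nlinarith [div_nonneg (by norm_num : (0:ℝ) ≤ 2) hF₁pos.le]
      exact le_trans (min_le_left _ _) h5
    have hI : (∫ p : Vec3, Real.sqrt (quadForm B p) * f p) ≤ F₁ / (16 * Real.pi) := by
      have h6 := le_trans hT1le hle
      rw [le_div_iff₀ (by positivity : (0:ℝ) < 16 * Real.pi)]
      linarith
    have hqbound : ∀ i : Fin 3, quadForm B (Pi.single i 1) ≤ r^2 := by
      intro i
      have hne0 : (Pi.single i (1:ℝ) : Vec3) ≠ 0 := by
        intro h0
        have h1 := congrFun h0 i
        simp at h1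
      have hqpos : 0 < quadForm B (Pi.single i 1) := by
        have hx := hB.dotProduct_mulVec_pos hne0
        rwa [show star (Pi.single i (1:ℝ) : Vec3) = Pi.single i 1 from
          funext fun k => star_trivial _] at hx
      have hkey := int_sqrtquad_ge hmeas hnonneg hint hc0 hc0pos.le hsymm hpsd
        (enorm3_single i) hqpos
      have h7 : c0 * Real.sqrt (quadForm B (Pi.single i 1)) ≤ F₁ / (16 * Real.pi) :=
        le_trans hkey hI
      have h8 : Real.sqrt (quadForm B (Pi.single i 1)) ≤ r := by
        rw [hr, show F₁ / (16 * Real.pi * c0) = (F₁ / (16 * Real.pi)) / c0 by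
          rw [div_div]]
        rw [le_div_iff₀ hc0pos]
        linarith [mul_comm c0 (Real.sqrt (quadForm B (Pi.single i 1)))]
      nlinarith [Real.sq_sqrt hqpos.le, Real.sqrt_nonneg (quadForm B (Pi.single i 1))]
    refine ⟨hpsd, hsymm, hdet, fun i j => ?_⟩
    have hcs := quad_cs hsymm hpsd (Pi.single i 1) (Pi.single j 1)
    have hdot : Pi.single i 1 ⬝ᵥ B.mulVec (Pi.single j 1) = B i j := by
      rw [Matrix.mulVec_single, single_dotProduct]
      simp
    rw [hdot] at hcs
    have hq : quadForm B (Pi.single i 1) * quadForm B (Pi.single j 1) ≤ r^2 * r^2 :=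
      mul_le_mul (hqbound i) (hqbound j)
        (show 0 ≤ quadForm B (Pi.single j 1) from hpsd _) (by positivity)
    have h9 : |B i j| ≤ r^2 := by
      nlinarith [abs_nonneg (B i j), sq_abs (B i j), hcs, hq, hrpos]
    exact h9.trans (le_max_left _ _)
  have hKdet : Kset R d ⊆ {B : Mat3 | 0 < B.det} := fun B hB =>
    lt_of_lt_of_le hdpos hB.2.2.1
  obtain ⟨B₀, hB₀K, hmin⟩ := (isCompact_Kset R d).exists_isMinOn ⟨1, h1K⟩
    ((continuousOn_Ffun hmeas hnonneg hint h).mono hKdet)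
  refine ⟨B₀, posDef_of_mem_Kset hdpos hB₀K, fun B hB => ?_⟩
  rcases le_or_gt (Ffun f h B) F₁ with hc | hc
  · exact isMinOn_iff.mp hmin B (hsub B hB hc)
  · exact le_trans (isMinOn_iff.mp hmin 1 h1K) hc.le
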